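/- Let F be a Borel probability measure on [0,1] with continuous density f with respect to Lebesgue measure, and suppose there exist c > 0 and δ > 0 such that f(x) = c + O((1−x)^δ) as x → 1⁻. Then ∑_{k=2}^n (n choose k) (−1)^k ζ_F(k) = c n log n + O(n) as n → ∞, where ζ_F(k) = ∑_{j=1}^∞ m_j(F)^k. -/

import Mathlib

open Finset intervalIntegral MeasureTheory

private lemma aux_quad (m : ℝ) (h0 : 0 ≤ m) (h1 : m ≤ 1) (n : ℕ) :
    (1 - m) ^ n ≤ 1 - n * m + (n : ℝ) ^ 2 * m ^ 2 := by
  induction n with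
  | zero => norm_num
  | succ n ih =>
    have h2 : (0:ℝ) ≤ 1 - m := by linarith
    have h4 : (1-m)^n * (1-m) ≤ (1 - n*m + (n:ℝ)^2*m^2) * (1-m) :=
      mul_le_mul_of_nonneg_right ih h2
    have h5 : (1-m)^(n+1) = (1-m)^n * (1-m) := pow_succ _ _
    push_cast
    nlinarith [sq_nonneg m, sq_nonneg ((n:ℝ)*m), mul_nonneg (mul_nonneg (sq_nonneg (n:ℝ)) (mul_nonneg h0 h0)) h0]

private lemma aux_binom (n : ℕ) (hn : 2 ≤ n) (m : ℝ) :
    ∑ k ∈ Finset.Icc 2 n, (n.choose k : ℝ) * (-1:ℝ)^k * m^k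
      = (1-m)^n - 1 + n*m := by
  have hb : (1 - m)^n = ∑ k ∈ Finset.range (n+1), (n.choose k : ℝ) * (-1:ℝ)^k * m^k := by
    have := add_pow (-m) (1:ℝ) n
    rw [show (-m) + 1 = 1 - m by ring] at this
    rw [this]
    refine Finset.sum_congr rfl fun k _ => ?_
    rw [neg_pow]
    ring
  have hI : Finset.Icc 2 n = Finset.Ico 2 (n+1) := by rw [Finset.Ico_add_one_right_eq_Icc]
  rw [hI, Finset.sum_Ico_eq_sub _ (by omega)]
  rw [← hb]
  rw [Finset.sum_range_succ, Finset.sum_range_one]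
  simp [Nat.choose_one_right]
  ring

private lemma harm_lower (n : ℕ) (hn : 1 ≤ n) :
    Real.log n - Real.log 2 ≤ ∑ j ∈ Finset.range n, (1:ℝ)/((j:ℝ)+2) := by
  have tele : ∑ j ∈ Finset.range n, (Real.log ((j:ℝ)+3) - Real.log ((j:ℝ)+2))
      = Real.log ((n:ℝ)+2) - Real.log 2 := by
    have h := Finset.sum_range_sub (fun j : ℕ => Real.log ((j:ℝ)+2)) n
    calc ∑ j ∈ Finset.range n, (Real.log ((j:ℝ)+3) - Real.log ((j:ℝ)+2))
        = ∑ j ∈ Finset.range n, (Real.log ((↑(j+1):ℝ)+2) - Real.log ((j:ℝ)+2)) := by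
          refine Finset.sum_congr rfl fun j _ => ?_; push_cast; ring_nf
      _ = Real.log ((n:ℝ)+2) - Real.log 2 := by rw [h]; norm_num
  have step : ∀ j : ℕ, Real.log ((j:ℝ)+3) - Real.log ((j:ℝ)+2) ≤ 1/((j:ℝ)+2) := by
    intro j
    have hx : (0:ℝ) < (j:ℝ)+2 := by positivity
    have h := Real.log_le_sub_one_of_pos (show (0:ℝ) < ((j:ℝ)+3)/((j:ℝ)+2) by positivity)
    rw [Real.log_div (by positivity) (ne_of_gt hx)] at h
    have he : ((j:ℝ)+3)/((j:ℝ)+2) - 1 = 1/((j:ℝ)+2) := by field_simp; norm_num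
    linarith
  have hsum : Real.log ((n:ℝ)+2) - Real.log 2 ≤ ∑ j ∈ Finset.range n, (1:ℝ)/((j:ℝ)+2) := by
    rw [← tele]; exact Finset.sum_le_sum fun j _ => step j
  have hmono : Real.log (n:ℝ) ≤ Real.log ((n:ℝ)+2) :=
    Real.log_le_log (by exact_mod_cast hn) (by linarith)
  linarith

private lemma harm_upper (n : ℕ) (hn : 1 ≤ n) :
    ∑ j ∈ Finset.range n, (1:ℝ)/((j:ℝ)+2) ≤ Real.log n + Real.log 2 := by
  have tele : ∑ j ∈ Finset.range n, (Real.log ((j:ℝ)+2) - Real.log ((j:ℝ)+1))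
      = Real.log ((n:ℝ)+1) := by
    have h := Finset.sum_range_sub (fun j : ℕ => Real.log ((j:ℝ)+1)) n
    calc ∑ j ∈ Finset.range n, (Real.log ((j:ℝ)+2) - Real.log ((j:ℝ)+1))
        = ∑ j ∈ Finset.range n, (Real.log ((↑(j+1):ℝ)+1) - Real.log ((j:ℝ)+1)) := by
          refine Finset.sum_congr rfl fun j _ => ?_; push_cast; ring_nf
      _ = Real.log ((n:ℝ)+1) := by rw [h]; norm_num
  have step : ∀ j : ℕ, (1:ℝ)/((j:ℝ)+2) ≤ Real.log ((j:ℝ)+2) - Real.log ((j:ℝ)+1) := by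
    intro j
    have hx : (0:ℝ) < (j:ℝ)+2 := by positivity
    have h := Real.log_le_sub_one_of_pos (show (0:ℝ) < ((j:ℝ)+1)/((j:ℝ)+2) by positivity)
    rw [Real.log_div (by positivity) (ne_of_gt hx)] at h
    have he : ((j:ℝ)+1)/((j:ℝ)+2) - 1 = -(1/((j:ℝ)+2)) := by field_simp; ring
    linarith
  have hsum : ∑ j ∈ Finset.range n, (1:ℝ)/((j:ℝ)+2) ≤ Real.log ((n:ℝ)+1) := by
    rw [← tele]; exact Finset.sum_le_sum fun j _ => step j
  have hmono : Real.log ((n:ℝ)+1) ≤ Real.log (2*(n:ℝ)) := by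
    apply Real.log_le_log (by positivity)
    have : (1:ℝ) ≤ (n:ℝ) := by exact_mod_cast hn
    linarith
  have hlog2 : Real.log (2*(n:ℝ)) = Real.log 2 + Real.log n := by
    rw [Real.log_mul (by norm_num) (by positivity)]
  have : (0:ℝ) < (n:ℝ) := by exact_mod_cast hn
  linarith

set_option maxHeartbeats 1600000 in
/-- Let `F` be a Borel probability measure on `[0,1]` with continuous density
`f` satisfying `f(x) = c + O((1−x)^δ)` as `x → 1⁻`, with `c, δ > 0`.  Then
`∑_{k=2}^n C(n,k)(−1)^k ζ_F(k) = c n log n + O(n)` as `n → ∞`. -/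
theorem moment_zeta_alternating_sum_with_error
    (f : ℝ → ℝ) (hcont : ContinuousOn f (Set.Icc (0 : ℝ) 1)) (hnn : ∀ x, 0 ≤ f x)
    (hsupp : ∀ x, x ∉ Set.Icc (0 : ℝ) 1 → f x = 0)
    (hprob : ∫ x in (0 : ℝ)..1, f x = 1)
    (c δ : ℝ) (hc : 0 < c) (hδ : 0 < δ)
    (hasymp : Asymptotics.IsBigO (nhdsWithin 1 (Set.Iio (1 : ℝ)))
      (fun x => f x - c) (fun x => (1 - x) ^ δ)) :
    Asymptotics.IsBigO Filter.atTop
      (fun n : ℕ => (∑ k ∈ Finset.Icc 2 n, (n.choose k : ℝ) * (-1 : ℝ) ^ k *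
          ∑' j : ℕ, (∫ x in (0 : ℝ)..1, x ^ (j + 1) * f x) ^ k) -
        c * n * Real.log n)
      (fun n : ℕ => (n : ℝ)) := by
  set m : ℕ → ℝ := fun j => ∫ x in (0:ℝ)..1, x ^ (j + 1) * f x with hmdef
  have hmj : ∀ j : ℕ, (∫ x in (0:ℝ)..1, x ^ (j + 1) * f x) = m j := fun j => rfl
  have huIcc : Set.uIcc (0:ℝ) 1 = Set.Icc 0 1 := Set.uIcc_of_le zero_le_one
  have hfint : IntervalIntegrable f volume 0 1 := by
    apply ContinuousOn.intervalIntegrable; rwa [huIcc]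
  have hint_pow : ∀ j:ℕ, IntervalIntegrable (fun x => x^(j+1) * f x) volume 0 1 := by
    intro j
    apply ContinuousOn.intervalIntegrable
    rw [huIcc]
    exact (continuous_pow (j+1)).continuousOn.mul hcont
  -- the max of f
  obtain ⟨xM, hxM, hMmax⟩ := isCompact_Icc.exists_isMaxOn
    (Set.nonempty_Icc.mpr zero_le_one) hcont
  set M : ℝ := f xM with hMdef
  have hM : ∀ x ∈ Set.Icc (0:ℝ) 1, f x ≤ M := fun x hx => hMmax hx
  have hM0 : 0 ≤ M := hnn xM
  -- value of ∫ x^(j+1)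
  have hpowint : ∀ j:ℕ, (∫ x in (0:ℝ)..1, x^(j+1)) = 1/((j:ℝ)+2) := by
    intro j
    rw [integral_pow]
    push_cast
    norm_num
    ring
  -- basic moment bounds
  have hm0 : ∀ j, 0 ≤ m j := by
    intro j
    apply intervalIntegral.integral_nonneg (by norm_num)
    intro x hx
    exact mul_nonneg (pow_nonneg hx.1 _) (hnn x)
  have hm1 : ∀ j, m j ≤ 1 := by
    intro j
    rw [← hprob]
    apply intervalIntegral.integral_mono_on (by norm_num) (hint_pow j) hfint
    intro x hx
    have : x^(j+1) ≤ 1 := pow_le_one₀ hx.1 hx.2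
    exact mul_le_of_le_one_left (hnn x) this
  have hmM : ∀ j, m j ≤ M * (1/((j:ℝ)+2)) := by
    intro j
    have h1 : m j ≤ ∫ x in (0:ℝ)..1, M * x^(j+1) := by
      apply intervalIntegral.integral_mono_on (by norm_num) (hint_pow j)
        ((continuous_const.mul (continuous_pow (j+1))).intervalIntegrable _ _)
      intro x hx
      calc x^(j+1) * f x ≤ x^(j+1) * M :=
            mul_le_mul_of_nonneg_left (hM x hx) (pow_nonneg hx.1 _)
        _ = M * x^(j+1) := mul_comm _ _
    rwa [intervalIntegral.integral_const_mul, hpowint j] at h1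
  -- f 1 = c
  have h1mem : (1:ℝ) ∈ Set.Icc (0:ℝ) 1 := by norm_num
  have hf1 : f 1 = c := by
    have ht1 : Filter.Tendsto f (nhdsWithin 1 (Set.Iio (1:ℝ))) (nhds (f 1)) := by
      have h := (hcont 1 h1mem).mono (Set.Ioo_subset_Icc_self (a := (0:ℝ)) (b := 1))
      rwa [ContinuousWithinAt, nhdsWithin_Ioo_eq_nhdsLT (by norm_num : (0:ℝ) < 1)] at h
    have ht2 : Filter.Tendsto (fun x => f x - c) (nhdsWithin 1 (Set.Iio (1:ℝ))) (nhds 0) := by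
      apply hasymp.trans_tendsto
      have hsub : Filter.Tendsto (fun x:ℝ => 1 - x) (nhdsWithin 1 (Set.Iio (1:ℝ))) (nhds 0) := by
        have hcont1 : Continuous (fun x:ℝ => 1 - x) := continuous_const.sub continuous_id
        have h := hcont1.tendsto (1:ℝ)
        simp only [sub_self] at h
        exact h.mono_left nhdsWithin_le_nhds
      have hc0 : Filter.Tendsto (fun u:ℝ => u ^ δ) (nhds 0) (nhds 0) := by
        have h := (Real.continuousAt_rpow_const 0 δ (Or.inr hδ.le)).tendsto
        rwa [Real.zero_rpow (ne_of_gt hδ)] at h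
      exact hc0.comp hsub
    have ht3 : Filter.Tendsto (fun x => f x - c) (nhdsWithin 1 (Set.Iio (1:ℝ))) (nhds (f 1 - c)) :=
      ht1.sub tendsto_const_nhds
    have := tendsto_nhds_unique ht3 ht2
    linarith
  -- global bound |f x - c| ≤ C2 (1-x)^δ on [0,1]
  obtain ⟨C1, hC1pos, hC1w⟩ := hasymp.exists_pos
  rw [Asymptotics.isBigOWith_iff] at hC1w
  obtain ⟨x1, hx1lt, hx1⟩ := mem_nhdsLT_iff_exists_Ioo_subset.mp hC1w
  set x2 : ℝ := max x1 (1/2) with hx2def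
  have hx2lt : x2 < 1 := max_lt hx1lt (by norm_num)
  have hx2nn : (0:ℝ) ≤ x2 := le_trans (by norm_num) (le_max_right _ _)
  have hx2pos : (0:ℝ) < 1 - x2 := by linarith
  set C2 : ℝ := max C1 ((M + c)/(1-x2)^δ) with hC2def
  have hC2nn : 0 ≤ C2 := le_trans hC1pos.le (le_max_left _ _)
  have hC2 : ∀ x ∈ Set.Icc (0:ℝ) 1, |f x - c| ≤ C2 * (1-x)^δ := by
    intro x hx
    rcases eq_or_lt_of_le hx.2 with h1 | h1
    · rw [h1, hf1]
      simp [Real.zero_rpow (ne_of_gt hδ)]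
    · rcases le_or_gt x x2 with h2 | h2
      · have hb1 : |f x - c| ≤ M + c := by
          have := abs_sub (f x) c
          have h3 : |f x| = f x := abs_of_nonneg (hnn x)
          have h4 : |c| = c := abs_of_nonneg hc.le
          calc |f x - c| ≤ |f x| + |c| := abs_sub _ _
            _ = f x + c := by rw [h3, h4]
            _ ≤ M + c := by linarith [hM x hx]
        have hb2 : (1-x2)^δ ≤ (1-x)^δ :=
          Real.rpow_le_rpow (by linarith) (by linarith) hδ.le
        have hb3 : (0:ℝ) < (1-x2)^δ := Real.rpow_pos_of_pos hx2pos δ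
        calc |f x - c| ≤ M + c := hb1
          _ = ((M + c)/(1-x2)^δ) * (1-x2)^δ := by field_simp
          _ ≤ C2 * (1-x)^δ := by
              apply mul_le_mul (le_max_right _ _) hb2 hb3.le hC2nn
      · have hxmem : x ∈ Set.Ioo x1 1 := ⟨lt_of_le_of_lt (le_max_left _ _) h2, h1⟩
        have := hx1 hxmem
        simp only [Set.mem_setOf_eq, Real.norm_eq_abs] at this
        have habs : |(1-x)^δ| = (1-x)^δ := abs_of_nonneg (Real.rpow_nonneg (by linarith) δ)
        rw [habs] at this
        calc |f x - c| ≤ C1 * (1-x)^δ := this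
          _ ≤ C2 * (1-x)^δ := by
              apply mul_le_mul_of_nonneg_right (le_max_left _ _)
                (Real.rpow_nonneg (by linarith) δ)
  -- summability facts
  have hsum2 : Summable (fun j : ℕ => 1/((j:ℝ)+2)^2) := by
    have h1 : Summable (fun n : ℕ => 1/(n:ℝ)^2) := Real.summable_one_div_nat_pow.mpr one_lt_two
    have h2 := (summable_nat_add_iff 2).mpr h1
    apply h2.congr
    intro j
    push_cast
    ring_nf
  have hmsq : ∀ j:ℕ, (m j)^2 ≤ M^2 * (1/((j:ℝ)+2)^2) := by
    intro j
    calc (m j)^2 ≤ (M * (1/((j:ℝ)+2)))^2 := pow_le_pow_left₀ (hm0 j) (hmM j) 2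
      _ = M^2 * (1/((j:ℝ)+2)^2) := by rw [mul_pow, div_pow, one_pow]
  have hsummsq : Summable (fun j : ℕ => (m j)^2) :=
    Summable.of_nonneg_of_le (fun j => sq_nonneg _) hmsq (hsum2.mul_left (M^2))
  have hsumk : ∀ k:ℕ, 2 ≤ k → Summable (fun j => (m j)^k) := by
    intro k hk
    exact Summable.of_nonneg_of_le (fun j => pow_nonneg (hm0 j) k)
      (fun j => pow_le_pow_of_le_one (hm0 j) (hm1 j) hk) hsummsq
  -- the key estimate : partial sums of moments vs harmonic sums
  have hint_c : ∀ j:ℕ, IntervalIntegrable (fun x => x^(j+1) * (f x - c)) volume 0 1 := by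
    intro j
    apply ContinuousOn.intervalIntegrable
    rw [huIcc]
    exact (continuous_pow (j+1)).continuousOn.mul (hcont.sub continuousOn_const)
  have hmc : ∀ j:ℕ, m j - c * (1/((j:ℝ)+2)) = ∫ x in (0:ℝ)..1, x^(j+1) * (f x - c) := by
    intro j
    have h2 : ∫ x in (0:ℝ)..1, (x^(j+1) * f x - c * x^(j+1))
        = m j - c * (1/((j:ℝ)+2)) := by
      rw [intervalIntegral.integral_sub (g := fun x:ℝ => c * x^(j+1)) (hint_pow j)
        ((continuous_const.mul (continuous_pow (j+1))).intervalIntegrable _ _),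
        intervalIntegral.integral_const_mul, hpowint j, hmj j]
    rw [← h2]
    apply intervalIntegral.integral_congr
    intro x _
    ring
  have hB : ∀ n:ℕ, |∑ j ∈ Finset.range n, m j - c * ∑ j ∈ Finset.range n, (1:ℝ)/((j:ℝ)+2)| ≤ C2/δ := by
    intro n
    have e1 : ∑ j ∈ Finset.range n, m j - c * ∑ j ∈ Finset.range n, (1:ℝ)/((j:ℝ)+2)
        = ∑ j ∈ Finset.range n, (m j - c * (1/((j:ℝ)+2))) := by
      rw [Finset.sum_sub_distrib, Finset.mul_sum]
    have e2 : ∑ j ∈ Finset.range n, (m j - c * (1/((j:ℝ)+2)))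
        = ∫ x in (0:ℝ)..1, (∑ j ∈ Finset.range n, x^(j+1)) * (f x - c) := by
      have h3 : ∀ j ∈ Finset.range n, m j - c * (1/((j:ℝ)+2))
          = ∫ x in (0:ℝ)..1, x^(j+1) * (f x - c) := fun j _ => hmc j
      rw [Finset.sum_congr rfl h3, ← intervalIntegral.integral_finset_sum (fun j _ => hint_c j)]
      apply intervalIntegral.integral_congr
      intro x _
      exact (Finset.sum_mul _ _ _).symm
    rw [e1, e2]
    have hPcont : Continuous (fun x:ℝ => ∑ j ∈ Finset.range n, x^(j+1)) := by
      apply continuous_finset_sum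
      intro j _
      exact continuous_pow (j+1)
    have hQint : IntervalIntegrable
        (fun x => |(∑ j ∈ Finset.range n, x^(j+1)) * (f x - c)|) volume 0 1 := by
      apply ContinuousOn.intervalIntegrable
      rw [huIcc]
      exact ((hPcont.continuousOn).mul (hcont.sub continuousOn_const)).abs
    have hRint : IntervalIntegrable (fun x:ℝ => C2 * (1-x)^(δ-1)) volume 0 1 := by
      have h1 : IntervalIntegrable (fun u:ℝ => u^(δ-1)) volume 0 1 :=
        intervalIntegrable_rpow' (by linarith)
      have h2 := h1.comp_sub_left 1
      simp only [sub_zero, sub_self] at h2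
      exact (h2.symm).const_mul C2
    have habs := intervalIntegral.abs_integral_le_integral_abs (μ := volume)
      (f := fun x => (∑ j ∈ Finset.range n, x^(j+1)) * (f x - c)) (by norm_num : (0:ℝ) ≤ 1)
    have hpt : ∀ x ∈ Set.Icc (0:ℝ) 1,
        |(∑ j ∈ Finset.range n, x^(j+1)) * (f x - c)| ≤ C2 * (1-x)^(δ-1) := by
      intro x hx
      have hPnn : 0 ≤ ∑ j ∈ Finset.range n, x^(j+1) :=
        Finset.sum_nonneg fun j _ => pow_nonneg hx.1 _
      rw [abs_mul, abs_of_nonneg hPnn]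
      rcases eq_or_lt_of_le hx.2 with h1 | h1
      · rw [h1, hf1]
        simp only [sub_self, abs_zero, mul_zero]
        exact mul_nonneg hC2nn (Real.rpow_nonneg (by norm_num) _)
      · have hpos : (0:ℝ) < 1 - x := by linarith
        have hP : (∑ j ∈ Finset.range n, x^(j+1)) = x * ∑ j ∈ Finset.range n, x^j := by
          rw [Finset.mul_sum]
          exact Finset.sum_congr rfl fun j _ => by ring
        have hPx : (∑ j ∈ Finset.range n, x^(j+1)) * (1-x) ≤ 1 := by
          rw [hP]
          have hgeom : (∑ j ∈ Finset.range n, x^j) * (x - 1) = x^n - 1 := geom_sum_mul x n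
          have hxn : 0 ≤ x^n := pow_nonneg hx.1 n
          have hxn1 : x^n ≤ 1 := pow_le_one₀ hx.1 hx.2
          nlinarith [hx.1, hx.2]
        have hrw : (1-x)^δ = (1-x) * (1-x)^(δ-1) := by
          have h := Real.rpow_add hpos 1 (δ-1)
          rw [Real.rpow_one] at h
          have h2 : 1 + (δ - 1) = δ := by ring
          rw [h2] at h
          exact h
        calc (∑ j ∈ Finset.range n, x^(j+1)) * |f x - c|
            ≤ (∑ j ∈ Finset.range n, x^(j+1)) * (C2 * (1-x)^δ) :=
              mul_le_mul_of_nonneg_left (hC2 x hx) hPnn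
          _ = C2 * (((∑ j ∈ Finset.range n, x^(j+1)) * (1-x)) * (1-x)^(δ-1)) := by
              rw [hrw]; ring
          _ ≤ C2 * (1 * (1-x)^(δ-1)) := by
              apply mul_le_mul_of_nonneg_left _ hC2nn
              exact mul_le_mul_of_nonneg_right hPx (Real.rpow_nonneg hpos.le _)
          _ = C2 * (1-x)^(δ-1) := by rw [one_mul]
    have hle := intervalIntegral.integral_mono_on (by norm_num : (0:ℝ) ≤ 1) hQint hRint hpt
    have hval : ∫ x in (0:ℝ)..1, C2 * (1-x)^(δ-1) = C2/δ := by
      rw [intervalIntegral.integral_const_mul]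
      have h1 : ∫ x in (0:ℝ)..1, (1-x)^(δ-1) = ∫ u in (0:ℝ)..1, u^(δ-1) := by
        have h := intervalIntegral.integral_comp_sub_left (a := (0:ℝ)) (b := 1)
          (fun u => u^(δ-1)) 1
        simpa using h
      rw [h1, integral_rpow (Or.inl (by linarith))]
      have h2 : δ - 1 + 1 = δ := by ring
      rw [h2, Real.one_rpow, Real.zero_rpow (ne_of_gt hδ)]
      field_simp
      norm_num
    calc |∫ x in (0:ℝ)..1, (∑ j ∈ Finset.range n, x^(j+1)) * (f x - c)|
        ≤ ∫ x in (0:ℝ)..1, |(∑ j ∈ Finset.range n, x^(j+1)) * (f x - c)| := habs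
      _ ≤ ∫ x in (0:ℝ)..1, C2 * (1-x)^(δ-1) := hle
      _ = C2/δ := hval
  -- tail bound for the squared moments
  have htail : ∀ n:ℕ, ∑' j:ℕ, (m (j+n))^2 ≤ M^2 * (1/((n:ℝ)+1)) := by
    intro n
    have hsummable : Summable (fun j => (m (j+n))^2) := (summable_nat_add_iff (f := fun j => (m j)^2) n).mpr hsummsq
    apply Summable.tsum_le_of_sum_le hsummable
    intro s
    obtain ⟨N, hsN⟩ := s.exists_nat_subset_range
    have h2 : ∀ j:ℕ, (m (j+n))^2 ≤ M^2 * (1/((j:ℝ)+(n:ℝ)+1) - 1/((j:ℝ)+(n:ℝ)+2)) := by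
      intro j
      have hx1 : (0:ℝ) < (j:ℝ)+(n:ℝ)+1 := by positivity
      have hx2 : (0:ℝ) < (j:ℝ)+(n:ℝ)+2 := by positivity
      have hmle : m (j+n) ≤ M * (1/((j:ℝ)+(n:ℝ)+2)) := by
        have h := hmM (j+n)
        push_cast at h
        convert h using 4
      have hsq : (m (j+n))^2 ≤ M^2 * (1/(((j:ℝ)+(n:ℝ)+2)^2)) := by
        calc (m (j+n))^2 ≤ (M * (1/((j:ℝ)+(n:ℝ)+2)))^2 := pow_le_pow_left₀ (hm0 _) hmle 2
          _ = M^2 * (1/(((j:ℝ)+(n:ℝ)+2)^2)) := by rw [mul_pow, div_pow, one_pow]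
      have hdiff : 1/((j:ℝ)+(n:ℝ)+1) - 1/((j:ℝ)+(n:ℝ)+2)
          = 1/(((j:ℝ)+(n:ℝ)+1)*((j:ℝ)+(n:ℝ)+2)) := by
        field_simp
        ring
      have hcmp : 1/(((j:ℝ)+(n:ℝ)+2)^2) ≤ 1/(((j:ℝ)+(n:ℝ)+1)*((j:ℝ)+(n:ℝ)+2)) := by
        apply one_div_le_one_div_of_le (by positivity)
        nlinarith
      calc (m (j+n))^2 ≤ M^2 * (1/(((j:ℝ)+(n:ℝ)+2)^2)) := hsq
        _ ≤ M^2 * (1/(((j:ℝ)+(n:ℝ)+1)*((j:ℝ)+(n:ℝ)+2))) :=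
            mul_le_mul_of_nonneg_left hcmp (sq_nonneg M)
        _ = M^2 * (1/((j:ℝ)+(n:ℝ)+1) - 1/((j:ℝ)+(n:ℝ)+2)) := by rw [hdiff]
    have htele : ∑ j ∈ Finset.range N, (1/((j:ℝ)+(n:ℝ)+1) - 1/((j:ℝ)+(n:ℝ)+2))
        = 1/((n:ℝ)+1) - 1/((N:ℝ)+(n:ℝ)+1) := by
      calc ∑ j ∈ Finset.range N, (1/((j:ℝ)+(n:ℝ)+1) - 1/((j:ℝ)+(n:ℝ)+2))
          = ∑ j ∈ Finset.range N, ((fun j:ℕ => 1/((j:ℝ)+(n:ℝ)+1)) j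
              - (fun j:ℕ => 1/((j:ℝ)+(n:ℝ)+1)) (j+1)) := by
            refine Finset.sum_congr rfl fun j _ => ?_
            show 1/((j:ℝ)+(n:ℝ)+1) - 1/((j:ℝ)+(n:ℝ)+2)
              = 1/((j:ℝ)+(n:ℝ)+1) - 1/((↑(j+1):ℝ)+(n:ℝ)+1)
            push_cast
            ring
        _ = (fun j:ℕ => 1/((j:ℝ)+(n:ℝ)+1)) 0 - (fun j:ℕ => 1/((j:ℝ)+(n:ℝ)+1)) N :=
            Finset.sum_range_sub' _ N
        _ = 1/((n:ℝ)+1) - 1/((N:ℝ)+(n:ℝ)+1) := by norm_num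
    calc ∑ j ∈ s, (m (j+n))^2 ≤ ∑ j ∈ Finset.range N, (m (j+n))^2 :=
          Finset.sum_le_sum_of_subset_of_nonneg hsN (fun j _ _ => sq_nonneg _)
      _ ≤ ∑ j ∈ Finset.range N, M^2 * (1/((j:ℝ)+(n:ℝ)+1) - 1/((j:ℝ)+(n:ℝ)+2)) :=
          Finset.sum_le_sum fun j _ => h2 j
      _ = M^2 * (1/((n:ℝ)+1) - 1/((N:ℝ)+(n:ℝ)+1)) := by rw [← Finset.mul_sum, htele]
      _ ≤ M^2 * (1/((n:ℝ)+1)) := by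
          apply mul_le_mul_of_nonneg_left _ (sq_nonneg M)
          have h9 : (0:ℝ) ≤ 1/((N:ℝ)+(n:ℝ)+1) := by positivity
          linarith
  -- final assembly
  have hBnn : 0 ≤ C2/δ := div_nonneg hC2nn hδ.le
  have hlog2 : 0 ≤ Real.log 2 := Real.log_nonneg one_le_two
  rw [Asymptotics.isBigO_iff]
  refine ⟨c * Real.log 2 + C2/δ + M^2 + c + 1, ?_⟩
  filter_upwards [Filter.eventually_ge_atTop 2] with n hn2
  have hn1 : 1 ≤ n := by omega
  have hnR : (2:ℝ) ≤ (n:ℝ) := by exact_mod_cast hn2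
  have hnR0 : (0:ℝ) ≤ (n:ℝ) := by positivity
  have hswap : (∑ k ∈ Finset.Icc 2 n, (n.choose k : ℝ) * (-1:ℝ)^k *
      ∑' j : ℕ, (∫ x in (0:ℝ)..1, x ^ (j+1) * f x) ^ k)
      = ∑' j : ℕ, ((1 - m j)^n - 1 + n * m j) := by
    simp only [hmj]
    calc ∑ k ∈ Finset.Icc 2 n, (n.choose k : ℝ) * (-1:ℝ)^k * ∑' j : ℕ, (m j)^k
        = ∑ k ∈ Finset.Icc 2 n, ∑' j : ℕ, ((n.choose k : ℝ) * (-1:ℝ)^k * (m j)^k) := by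
          refine Finset.sum_congr rfl fun k hk => ?_
          exact (tsum_mul_left).symm
      _ = ∑' j : ℕ, ∑ k ∈ Finset.Icc 2 n, ((n.choose k : ℝ) * (-1:ℝ)^k * (m j)^k) := by
          refine (Summable.tsum_finsetSum fun k hk => ?_).symm
          exact ((hsumk k (Finset.mem_Icc.mp hk).1).mul_left _)
      _ = ∑' j : ℕ, ((1 - m j)^n - 1 + n * m j) :=
          tsum_congr fun j => aux_binom n hn2 (m j)
  rw [hswap]
  have hGnn : ∀ j, 0 ≤ (1 - m j)^n - 1 + (n:ℝ) * m j := by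
    intro j
    have h := one_add_mul_le_pow (a := -(m j)) (by linarith [hm0 j, hm1 j]) n
    have h2 : (1:ℝ) + -(m j) = 1 - m j := by ring
    rw [h2] at h
    linarith
  have hGle_nm : ∀ j, (1 - m j)^n - 1 + (n:ℝ) * m j ≤ (n:ℝ) * m j := by
    intro j
    have h1 : (1 - m j)^n ≤ 1 := pow_le_one₀ (by linarith [hm1 j]) (by linarith [hm0 j])
    linarith
  have hGlo : ∀ j, (n:ℝ) * m j - 1 ≤ (1 - m j)^n - 1 + (n:ℝ) * m j := by
    intro j
    have h1 : 0 ≤ (1 - m j)^n := pow_nonneg (by linarith [hm1 j]) n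
    linarith
  have hGquad : ∀ j, (1 - m j)^n - 1 + (n:ℝ) * m j ≤ (n:ℝ)^2 * (m j)^2 := by
    intro j
    have h := aux_quad (m j) (hm0 j) (hm1 j) n
    linarith
  have hGsum : Summable (fun j => (1 - m j)^n - 1 + (n:ℝ) * m j) :=
    Summable.of_nonneg_of_le hGnn hGquad (hsummsq.mul_left ((n:ℝ)^2))
  have hsplit := Summable.sum_add_tsum_nat_add n hGsum
  have htailn : ∑' j:ℕ, ((1 - m (j+n))^n - 1 + (n:ℝ) * m (j+n)) ≤ M^2 * (n:ℝ) := by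
    have h1 : ∑' j:ℕ, ((1 - m (j+n))^n - 1 + (n:ℝ) * m (j+n))
        ≤ ∑' j:ℕ, (n:ℝ)^2 * (m (j+n))^2 :=
      Summable.tsum_le_tsum (fun j => hGquad (j+n)) ((summable_nat_add_iff (f := fun j => (1 - m j)^n - 1 + (n:ℝ) * m j) n).mpr hGsum)
        (((summable_nat_add_iff (f := fun j => (m j)^2) n).mpr hsummsq).mul_left ((n:ℝ)^2))
    have h2 : ∑' j:ℕ, (n:ℝ)^2 * (m (j+n))^2 = (n:ℝ)^2 * ∑' j:ℕ, (m (j+n))^2 := tsum_mul_left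
    have h3 := htail n
    have h4 : (n:ℝ)^2 * (∑' j:ℕ, (m (j+n))^2) ≤ (n:ℝ)^2 * (M^2 * (1/((n:ℝ)+1))) :=
      mul_le_mul_of_nonneg_left h3 (by positivity)
    have h5 : (n:ℝ)^2 * (M^2 * (1/((n:ℝ)+1))) ≤ M^2 * (n:ℝ) := by
      have hpos : (0:ℝ) < (n:ℝ)+1 := by positivity
      have he : (n:ℝ)^2 * (M^2 * (1/((n:ℝ)+1))) = M^2 * ((n:ℝ)^2/((n:ℝ)+1)) := by ring
      rw [he]
      apply mul_le_mul_of_nonneg_left _ (sq_nonneg M)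
      rw [div_le_iff₀ hpos]
      nlinarith
    linarith
  have htail0 : 0 ≤ ∑' j:ℕ, ((1 - m (j+n))^n - 1 + (n:ℝ) * m (j+n)) :=
    tsum_nonneg fun j => hGnn (j+n)
  have hhead_up : ∑ j ∈ Finset.range n, ((1 - m j)^n - 1 + (n:ℝ) * m j)
      ≤ (n:ℝ) * ∑ j ∈ Finset.range n, m j := by
    calc ∑ j ∈ Finset.range n, ((1 - m j)^n - 1 + (n:ℝ) * m j)
        ≤ ∑ j ∈ Finset.range n, (n:ℝ) * m j := Finset.sum_le_sum fun j _ => hGle_nm j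
      _ = (n:ℝ) * ∑ j ∈ Finset.range n, m j := by rw [Finset.mul_sum]
  have hhead_lo : (n:ℝ) * (∑ j ∈ Finset.range n, m j) - (n:ℝ)
      ≤ ∑ j ∈ Finset.range n, ((1 - m j)^n - 1 + (n:ℝ) * m j) := by
    have h1 : ∑ j ∈ Finset.range n, ((n:ℝ) * m j - 1)
        = (n:ℝ) * (∑ j ∈ Finset.range n, m j) - (n:ℝ) := by
      rw [Finset.sum_sub_distrib, ← Finset.mul_sum, Finset.sum_const, Finset.card_range,
        nsmul_eq_mul, mul_one]
    rw [← h1]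
    exact Finset.sum_le_sum fun j _ => hGlo j
  have hBn := abs_le.mp (hB n)
  have hH1 := harm_lower n hn1
  have hH2 := harm_upper n hn1
  -- combine
  have hSm1 : ∑ j ∈ Finset.range n, m j ≤ c * (Real.log n + Real.log 2) + C2/δ := by
    have hch : c * (∑ j ∈ Finset.range n, (1:ℝ)/((j:ℝ)+2)) ≤ c * (Real.log n + Real.log 2) :=
      mul_le_mul_of_nonneg_left hH2 hc.le
    linarith [hBn.2]
  have hSm2 : c * (Real.log n - Real.log 2) - C2/δ ≤ ∑ j ∈ Finset.range n, m j := by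
    have hch : c * (Real.log n - Real.log 2) ≤ c * (∑ j ∈ Finset.range n, (1:ℝ)/((j:ℝ)+2)) :=
      mul_le_mul_of_nonneg_left hH1 hc.le
    linarith [hBn.1]
  have hup : (∑' j : ℕ, ((1 - m j)^n - 1 + (n:ℝ) * m j)) - c * (n:ℝ) * Real.log n
      ≤ (c * Real.log 2 + C2/δ + M^2 + c + 1) * (n:ℝ) := by
    have h6 : (n:ℝ) * (∑ j ∈ Finset.range n, m j)
        ≤ (n:ℝ) * (c * (Real.log n + Real.log 2) + C2/δ) :=
      mul_le_mul_of_nonneg_left hSm1 hnR0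
    have h7 : (n:ℝ) * (c * (Real.log n + Real.log 2) + C2/δ)
        = c * (n:ℝ) * Real.log n + (c * Real.log 2 + C2/δ) * (n:ℝ) := by ring
    have h8 : (0:ℝ) ≤ (c+1) * (n:ℝ) := mul_nonneg (by linarith) hnR0
    nlinarith [hsplit, htailn, hhead_up]
  have hlo : -((c * Real.log 2 + C2/δ + M^2 + c + 1) * (n:ℝ))
      ≤ (∑' j : ℕ, ((1 - m j)^n - 1 + (n:ℝ) * m j)) - c * (n:ℝ) * Real.log n := by
    have h6 : (n:ℝ) * (c * (Real.log n - Real.log 2) - C2/δ)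
        ≤ (n:ℝ) * (∑ j ∈ Finset.range n, m j) :=
      mul_le_mul_of_nonneg_left hSm2 hnR0
    have h7 : (n:ℝ) * (c * (Real.log n - Real.log 2) - C2/δ)
        = c * (n:ℝ) * Real.log n - (c * Real.log 2 + C2/δ) * (n:ℝ) := by ring
    have h8 : (0:ℝ) ≤ (M^2 + c) * (n:ℝ) := mul_nonneg (by positivity) hnR0
    nlinarith [hsplit, htail0, hhead_lo]
  have hnormn : ‖(n:ℝ)‖ = (n:ℝ) := Real.norm_of_nonneg hnR0
  rw [Real.norm_eq_abs, hnormn]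
  rw [abs_le]
  constructor
  · linarith [hlo]
  · linarith [hup]
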